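/- Let d ≥ 3, let v : (0,∞) → ℝ be continuous, and let r_d > 0 be such that v(r) + (d-2)²/(4r²) > 0 for all r ∈ (0, r_d). Set V(x) = v(‖x‖). Let λ < 0 and let u : ℝ^d → ℝ be a nonzero twice continuously differentiable function such that u and ‖∇u‖ are square integrable on ℝ^d and -Δu(x) + V(x)·u(x) = λ·u(x) for all x ≠ 0. Then no connected component of {x ∈ ℝ^d : u(x) ≠ 0} is contained in the open ball B(0, r_d). -/

import Mathlib

open MeasureTheory

open Filter Topology Set

/-- The Euclidean EuclLaplacian `Δu = Σᵢ ∂²u/∂xᵢ²`. -/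
noncomputable def EuclLaplacian {d : ℕ} (u : EuclideanSpace ℝ (Fin d) → ℝ)
    (x : EuclideanSpace ℝ (Fin d)) : ℝ :=
  ∑ i : Fin d, fderiv ℝ (fun y => fderiv ℝ u y (EuclideanSpace.single i 1)) x
      (EuclideanSpace.single i 1)

variable {d : ℕ}

noncomputable def Qf (y : EuclideanSpace ℝ (Fin d)) : ℝ := ∑ j, y j ^ 2

noncomputable def QD (y : EuclideanSpace ℝ (Fin d)) : EuclideanSpace ℝ (Fin d) →L[ℝ] ℝ :=
  ∑ j, (2 * y j) • (EuclideanSpace.proj j)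

lemma hasFDerivAt_Qf (y : EuclideanSpace ℝ (Fin d)) : HasFDerivAt Qf (QD y) y := by
  have h : ∀ j : Fin d, HasFDerivAt (fun z : EuclideanSpace ℝ (Fin d) => z j ^ 2)
      ((2 * y j) • (EuclideanSpace.proj j : EuclideanSpace ℝ (Fin d) →L[ℝ] ℝ)) y := by
    intro j
    have hp := (EuclideanSpace.proj j : EuclideanSpace ℝ (Fin d) →L[ℝ] ℝ).hasFDerivAt (x := y)
    have := (hasDerivAt_pow 2 (y j)).comp_hasFDerivAt y hp
    simp only [Function.comp_def] at this
    norm_num at this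
    exact this
  exact HasFDerivAt.fun_sum (fun j _ => h j)

lemma QD_apply (y : EuclideanSpace ℝ (Fin d)) (i : Fin d) :
    QD y (EuclideanSpace.single i 1) = 2 * y i := by
  simp [QD, ContinuousLinearMap.sum_apply, PiLp.proj_apply,
    EuclideanSpace.single_apply]

lemma Qf_eq_norm (y : EuclideanSpace ℝ (Fin d)) : Qf y = ‖y‖ ^ 2 := by
  rw [EuclideanSpace.norm_eq, Real.sq_sqrt (by positivity)]
  simp [Qf, sq_abs]

lemma Qf_pos {y : EuclideanSpace ℝ (Fin d)} (hy : y ≠ 0) : 0 < Qf y := by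
  rw [Qf_eq_norm]
  have : ‖y‖ ≠ 0 := norm_ne_zero_iff.mpr hy
  positivity

lemma Qf_zero {y : EuclideanSpace ℝ (Fin d)} (hy : Qf y ≠ 0) : y ≠ 0 := by
  intro h; apply hy; rw [h, Qf_eq_norm]; simp

lemma continuous_Qf : Continuous (Qf (d := d)) :=
  continuous_finset_sum _ fun j _ => ((EuclideanSpace.proj j).continuous.pow 2)

lemma hasFDerivAt_QfRpow {y : EuclideanSpace ℝ (Fin d)} (hy : Qf y ≠ 0) (p : ℝ) :
    HasFDerivAt (fun z => Qf z ^ p) ((p * Qf y ^ (p - 1)) • QD y) y :=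
  (Real.hasDerivAt_rpow_const (Or.inl hy)).comp_hasFDerivAt y (hasFDerivAt_Qf y)

lemma sderiv_test {g g' : ℝ → ℝ} {K : ℝ}
    (hg : ∀ᶠ t in 𝓝 (0:ℝ), HasDerivAt g (g' t) t)
    (hg' : HasDerivAt g' K 0)
    (hmax : IsLocalMax g 0) : K ≤ 0 ∧ g' 0 = 0 := by
  have h0 : g' 0 = 0 := by
    have h1 := hmax.deriv_eq_zero
    rwa [hg.self_of_nhds.deriv] at h1
  refine ⟨?_, h0⟩
  by_contra hK
  push_neg at hK
  -- slope of g' tends to K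
  have hslope := hasDerivAt_iff_tendsto_slope.mp hg'
  have hev1 : ∀ᶠ t in 𝓝[≠] (0:ℝ), K/2 < slope g' 0 t :=
    hslope.eventually (eventually_gt_nhds (by linarith))
  have hev2 : ∀ᶠ t in 𝓝 (0:ℝ), t ∈ Set.Ioi (0:ℝ) → 0 < g' t := by
    have h2 : ∀ᶠ t in 𝓝 (0:ℝ), t ∈ ({(0:ℝ)}ᶜ : Set ℝ) → K/2 < slope g' 0 t :=
      eventually_nhdsWithin_iff.mp hev1
    filter_upwards [h2] with t ht hti
    have ht0 : (0:ℝ) < t := hti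
    have := ht (by simpa using ht0.ne')
    have hs : slope g' 0 t = g' t / t := by
      simp [slope_def_field, h0]
    rw [hs] at this
    have : 0 < g' t / t := lt_trans (by linarith) this
    exact (div_pos_iff.mp this).resolve_right (fun h => absurd ht0 (not_lt.mpr h.2.le)) |>.1
  have hmax' : ∀ᶠ t in 𝓝 (0:ℝ), g t ≤ g 0 := hmax
  obtain ⟨δ, hδ, hδall⟩ := Metric.eventually_nhds_iff.mp (hg.and (hev2.and hmax'))
  have hball : ∀ t : ℝ, |t| < δ → HasDerivAt g (g' t) t ∧ (0 < t → 0 < g' t) ∧ g t ≤ g 0 := by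
    intro t ht
    have := hδall (show dist t 0 < δ by simpa [Real.dist_eq] using ht)
    exact ⟨this.1, fun h => this.2.1 h, this.2.2⟩
  have hmono : StrictMonoOn g (Set.Icc 0 (δ/2)) := by
    apply strictMonoOn_of_deriv_pos (convex_Icc _ _)
    · intro t ht
      have : |t| < δ := by
        rw [abs_lt]; constructor <;> [linarith [ht.1]; linarith [ht.2]]
      exact ((hball t this).1.differentiableAt).continuousAt.continuousWithinAt
    · intro t ht
      rw [interior_Icc] at ht
      have habs : |t| < δ := by rw [abs_lt]; constructor <;> [linarith [ht.1]; linarith [ht.2]]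
      rw [(hball t habs).1.deriv]
      exact (hball t habs).2.1 ht.1
  have h1 : g 0 < g (δ/2) :=
    hmono (by constructor <;> linarith) (by constructor <;> linarith) (by linarith)
  have h2 : g (δ/2) ≤ g 0 := (hball (δ/2) (by rw [abs_lt]; constructor <;> linarith)).2.2
  linarith


set_option maxHeartbeats 2000000 in
lemma key (hd : 3 ≤ d) {v : ℝ → ℝ} {rd : ℝ}
    (hpos : ∀ r ∈ Set.Ioo (0:ℝ) rd, v r + ((d:ℝ)-2)^2/(4*r^2) > 0)
    {lam : ℝ} (hlam : lam < 0) {U : EuclideanSpace ℝ (Fin d) → ℝ}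
    (hU : ContDiff ℝ 2 U)
    (heq : ∀ x : EuclideanSpace ℝ (Fin d), x ≠ 0 →
      -EuclLaplacian U x + v ‖x‖ * U x = lam * U x)
    {Ω : Set (EuclideanSpace ℝ (Fin d))} (hΩo : IsOpen Ω) (hΩne : Ω.Nonempty)
    (hΩb : Ω ⊆ Metric.ball 0 rd)
    (hΩpos : ∀ y ∈ Ω, 0 < U y)
    (hcl : ∀ y ∈ closure Ω, y ∉ Ω → U y = 0) : False := by
  classical
  set γ : ℝ := ((d:ℝ) - 2) / 4 with hγdef
  have hd3 : (3:ℝ) ≤ (d:ℝ) := by exact_mod_cast hd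
  have hγ : 0 < γ := by rw [hγdef]; linarith
  set φ : EuclideanSpace ℝ (Fin d) → ℝ := fun y => Qf y ^ γ with hφdef
  have hφc : Continuous φ := continuous_Qf.rpow_const (fun y => Or.inr hγ.le)
  set h : EuclideanSpace ℝ (Fin d) → ℝ := fun y => U y * φ y with hhdef
  have hhc : Continuous h := (hU.continuous).mul hφc
  -- compact closure
  have hcomp : IsCompact (closure Ω) := by
    refine (isCompact_closedBall (0 : EuclideanSpace ℝ (Fin d)) rd).of_isClosed_subset
      isClosed_closure ?_
    exact closure_minimal (hΩb.trans Metric.ball_subset_closedBall) Metric.isClosed_closedBall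
  obtain ⟨z, hz⟩ := hΩne
  -- a nonzero point of Ω
  obtain ⟨x', hx'Ω, hx'0⟩ : ∃ x' ∈ Ω, x' ≠ (0 : EuclideanSpace ℝ (Fin d)) := by
    by_cases hz0 : z = 0
    · obtain ⟨ε, hε, hball⟩ := Metric.isOpen_iff.mp hΩo z hz
      set w : EuclideanSpace ℝ (Fin d) :=
        EuclideanSpace.single (⟨0, by omega⟩ : Fin d) (ε/2)
      have hwn : ‖w‖ = ε/2 := by
        rw [EuclideanSpace.norm_single, Real.norm_eq_abs, abs_of_pos (by linarith)]
      refine ⟨z + w, hball ?_, ?_⟩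
      · rw [Metric.mem_ball, dist_eq_norm]
        simp only [add_sub_cancel_left]
        rw [hwn]; linarith
      · rw [hz0, zero_add]
        intro hw0
        rw [hw0, norm_zero] at hwn; linarith
    · exact ⟨z, hz, hz0⟩
  -- max of h on closure Ω
  obtain ⟨x₀, hx₀cl, hx₀max⟩ :=
    hcomp.exists_isMaxOn ⟨x', subset_closure hx'Ω⟩ hhc.continuousOn
  have hhx' : 0 < h x' := by
    have h1 : 0 < U x' := hΩpos _ hx'Ω
    have h2 : 0 < φ x' := Real.rpow_pos_of_pos (Qf_pos hx'0) γ
    exact mul_pos h1 h2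
  have hhx₀ : 0 < h x₀ := lt_of_lt_of_le hhx' (hx₀max (subset_closure hx'Ω))
  have hQx₀ : Qf x₀ ≠ 0 := by
    intro h0
    rw [hhdef] at hhx₀
    simp only at hhx₀
    rw [hφdef] at hhx₀
    simp only [h0, Real.zero_rpow hγ.ne', mul_zero] at hhx₀
    exact lt_irrefl _ hhx₀
  have hx₀0 : x₀ ≠ 0 := Qf_zero hQx₀
  have hq : 0 < Qf x₀ := Qf_pos hx₀0
  have hφx₀ : 0 < φ x₀ := Real.rpow_pos_of_pos hq γ
  have hUx₀ : 0 < U x₀ := by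
    have hmul : 0 < U x₀ * φ x₀ := hhx₀
    nlinarith [hmul, hφx₀]
  have hx₀Ω : x₀ ∈ Ω := by
    by_contra hno
    exact absurd (hcl x₀ hx₀cl hno) hUx₀.ne'
  have hloc : IsLocalMax h x₀ := by
    filter_upwards [hΩo.mem_nhds hx₀Ω] with y hy
    exact hx₀max (subset_closure hy)
  -- differentiability facts
  have hUdiff : Differentiable ℝ U := hU.differentiable (by norm_num)
  have hUdc : ∀ i : Fin d, ContDiff ℝ 1 (fun y => fderiv ℝ U y (EuclideanSpace.single i 1)) :=
    fun i => (hU.fderiv_right (by norm_num)).clm_apply contDiff_const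
  -- derivative of h at points with Qf y ≠ 0
  have hDh : ∀ y : EuclideanSpace ℝ (Fin d), Qf y ≠ 0 →
      HasFDerivAt h (U y • ((γ * Qf y ^ (γ-1)) • QD y) + (Qf y ^ γ) • (fderiv ℝ U y)) y := by
    intro y hy
    exact ((hUdiff y).hasFDerivAt).mul (hasFDerivAt_QfRpow hy γ)
  have hDh_apply : ∀ (y : EuclideanSpace ℝ (Fin d)) (i : Fin d),
      (U y • ((γ * Qf y ^ (γ-1)) • QD y) + (Qf y ^ γ) • (fderiv ℝ U y))
        (EuclideanSpace.single i 1)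
      = U y * (2*γ*Qf y ^ (γ-1) * y i)
        + Qf y ^ γ * fderiv ℝ U y (EuclideanSpace.single i 1) := by
    intro y i
    rw [ContinuousLinearMap.add_apply, ContinuousLinearMap.smul_apply,
      ContinuousLinearMap.smul_apply, QD_apply]
    simp only [ContinuousLinearMap.smul_apply, smul_eq_mul]
    ring
  -- lines
  set c : Fin d → ℝ → EuclideanSpace ℝ (Fin d) :=
    fun i t => x₀ + t • EuclideanSpace.single i 1 with hcdef
  have hc0 : ∀ i, c i 0 = x₀ := by intro i; simp [hcdef]
  have hline : ∀ (i : Fin d) (t : ℝ), HasDerivAt (c i) (EuclideanSpace.single i 1) t := by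
    intro i t
    have := ((hasDerivAt_id t).smul_const (EuclideanSpace.single i (1:ℝ))).const_add x₀
    rw [one_smul] at this
    exact this
  have hct : ∀ i : Fin d, Filter.Tendsto (c i) (𝓝 0) (𝓝 x₀) := by
    intro i
    have hcont : Continuous (c i) :=
      continuous_const.add (continuous_id.smul continuous_const)
    have := hcont.tendsto 0
    rwa [hc0 i] at this
  have hWev : ∀ i : Fin d, ∀ᶠ t in 𝓝 (0:ℝ), Qf (c i t) ≠ 0 := by
    intro i
    exact (hct i).eventually (continuous_Qf.continuousAt.eventually_ne hQx₀)
  -- the directional functions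
  have hgev : ∀ i : Fin d, ∀ᶠ t in 𝓝 (0:ℝ), HasDerivAt (fun s => h (c i s))
      (U (c i t) * (2*γ*Qf (c i t) ^ (γ-1) * (c i t) i)
        + Qf (c i t) ^ γ * fderiv ℝ U (c i t) (EuclideanSpace.single i 1)) t := by
    intro i
    filter_upwards [hWev i] with t ht
    have h1 := (hDh (c i t) ht).comp_hasDerivAt t (hline i t)
    rw [hDh_apply (c i t) i] at h1
    exact h1
  -- second derivative data
  have hmaxdir : ∀ i : Fin d, IsLocalMax (fun t => h (c i t)) (0:ℝ) := by
    intro i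
    have hev : ∀ᶠ t in 𝓝 (0:ℝ), h (c i t) ≤ h (c i 0) := by
      rw [hc0 i]
      exact (hct i).eventually hloc
    exact hev
  -- derivative of G i at x₀
  have hGderiv : ∀ i : Fin d, HasFDerivAt
      (fun y => U y * (2*γ*Qf y ^ (γ-1) * y i)
        + Qf y ^ γ * fderiv ℝ U y (EuclideanSpace.single i 1))
      ((U x₀ • ((2*γ*Qf x₀ ^ (γ-1)) • (EuclideanSpace.proj i : EuclideanSpace ℝ (Fin d) →L[ℝ] ℝ)
          + (x₀ i) • ((2*γ) • (((γ-1) * Qf x₀ ^ (γ-1-1)) • QD x₀)))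
        + (2*γ*Qf x₀ ^ (γ-1) * x₀ i) • (fderiv ℝ U x₀))
       + ((Qf x₀ ^ γ) • (fderiv ℝ (fun y => fderiv ℝ U y (EuclideanSpace.single i 1)) x₀)
        + (fderiv ℝ U x₀ (EuclideanSpace.single i 1)) • ((γ * Qf x₀ ^ (γ-1)) • QD x₀))) x₀ := by
    intro i
    have hA : HasFDerivAt (fun y : EuclideanSpace ℝ (Fin d) => 2*γ*Qf y ^ (γ-1))
        ((2*γ) • (((γ-1) * Qf x₀ ^ (γ-1-1)) • QD x₀)) x₀ :=
      (hasFDerivAt_QfRpow hQx₀ (γ-1)).const_mul (2*γ)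
    have hB0 := ContinuousLinearMap.hasFDerivAt
      (EuclideanSpace.proj i : EuclideanSpace ℝ (Fin d) →L[ℝ] ℝ) (x := x₀)
    have hB : HasFDerivAt (fun y : EuclideanSpace ℝ (Fin d) => y i)
        (EuclideanSpace.proj i : EuclideanSpace ℝ (Fin d) →L[ℝ] ℝ) x₀ := hB0
    have hFi := hA.mul hB
    have hUdx : HasFDerivAt (fun y => fderiv ℝ U y (EuclideanSpace.single i 1))
        (fderiv ℝ (fun y => fderiv ℝ U y (EuclideanSpace.single i 1)) x₀) x₀ :=
      (((hUdc i).differentiable (by norm_num)) x₀).hasFDerivAt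
    have hφx : HasFDerivAt (fun y : EuclideanSpace ℝ (Fin d) => Qf y ^ γ)
        ((γ * Qf x₀ ^ (γ-1)) • QD x₀) x₀ := hasFDerivAt_QfRpow hQx₀ γ
    exact (((hUdiff x₀).hasFDerivAt).mul hFi).add (hφx.mul hUdx)
  have hsnd : ∀ i : Fin d, HasDerivAt (fun t => U (c i t) * (2*γ*Qf (c i t) ^ (γ-1) * (c i t) i)
        + Qf (c i t) ^ γ * fderiv ℝ U (c i t) (EuclideanSpace.single i 1))
      (((U x₀ • ((2*γ*Qf x₀ ^ (γ-1)) • (EuclideanSpace.proj i : EuclideanSpace ℝ (Fin d) →L[ℝ] ℝ)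
          + (x₀ i) • ((2*γ) • (((γ-1) * Qf x₀ ^ (γ-1-1)) • QD x₀)))
        + (2*γ*Qf x₀ ^ (γ-1) * x₀ i) • (fderiv ℝ U x₀))
       + ((Qf x₀ ^ γ) • (fderiv ℝ (fun y => fderiv ℝ U y (EuclideanSpace.single i 1)) x₀)
        + (fderiv ℝ U x₀ (EuclideanSpace.single i 1)) • ((γ * Qf x₀ ^ (γ-1)) • QD x₀)))
        (EuclideanSpace.single i 1)) 0 := by
    intro i
    have hG' := hGderiv i
    rw [← hc0 i] at hG'
    have h1 := hG'.comp_hasDerivAt 0 (hline i 0)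
    rw [hc0 i] at h1
    exact h1
  have hKE := fun i : Fin d => sderiv_test (hgev i) (hsnd i) (hmaxdir i)
  -- rpow relations
  have hPq' : Qf x₀ ^ (γ-1) * Qf x₀ = Qf x₀ ^ γ := by
    nth_rewrite 2 [← Real.rpow_one (Qf x₀)]
    rw [← Real.rpow_add hq]
    norm_num
  have hPqq' : Qf x₀ ^ (γ-1-1) * Qf x₀ = Qf x₀ ^ (γ-1) := by
    nth_rewrite 2 [← Real.rpow_one (Qf x₀)]
    rw [← Real.rpow_add hq]
    norm_num
  have hP : 0 < Qf x₀ ^ γ := hφx₀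
  -- per-direction inequality (multiplied through by Qf x₀ ^ 2 and Qf x₀ ^ γ)
  have key2 : ∀ i : Fin d,
      Qf x₀^2 * ((Qf x₀ ^ γ)^2 * fderiv ℝ (fun y => fderiv ℝ U y (EuclideanSpace.single i 1))
          x₀ (EuclideanSpace.single i 1))
        + (4*γ*(γ-1) - 8*γ^2) * ((Qf x₀ ^ γ)^2 * U x₀) * (x₀ i)^2
        + 2*γ*((Qf x₀ ^ γ)^2 * U x₀) * Qf x₀ ≤ 0 := by
    intro i
    have hK := (hKE i).1
    have hE := (hKE i).2
    simp only [hc0 i] at hE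
    simp only [ContinuousLinearMap.add_apply, ContinuousLinearMap.smul_apply, QD_apply,
      smul_eq_mul, PiLp.proj_apply, EuclideanSpace.single_apply, if_pos rfl, if_true,
      mul_one] at hK
    have hKL := mul_nonpos_of_nonneg_of_nonpos
      (show (0:ℝ) ≤ Qf x₀^2 * Qf x₀ ^ γ by positivity) hK
    have hid : Qf x₀^2 * ((Qf x₀ ^ γ)^2 * fderiv ℝ
          (fun y => fderiv ℝ U y (EuclideanSpace.single i 1)) x₀ (EuclideanSpace.single i 1))
        + (4*γ*(γ-1) - 8*γ^2) * ((Qf x₀ ^ γ)^2 * U x₀) * (x₀ i)^2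
        + 2*γ*((Qf x₀ ^ γ)^2 * U x₀) * Qf x₀
        = Qf x₀^2 * Qf x₀ ^ γ *
          (U x₀ * (2 * γ * Qf x₀ ^ (γ - 1)
              + x₀ i * (2 * γ * ((γ - 1) * Qf x₀ ^ (γ - 1 - 1) * (2 * x₀ i))))
            + 2 * γ * Qf x₀ ^ (γ - 1) * x₀ i * (fderiv ℝ U x₀) (EuclideanSpace.single i 1)
            + (Qf x₀ ^ γ * (fderiv ℝ (fun y => (fderiv ℝ U y) (EuclideanSpace.single i 1)) x₀)
                (EuclideanSpace.single i 1)
              + (fderiv ℝ U x₀) (EuclideanSpace.single i 1)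
                * (γ * Qf x₀ ^ (γ - 1) * (2 * x₀ i)))) := by
      linear_combination (-4*γ*(Qf x₀ ^ γ)*(x₀ i)*Qf x₀) * hE
        + (-2*γ*(U x₀)*(Qf x₀ ^ γ)*(Qf x₀) - 4*γ*(γ-1)*(U x₀)*(Qf x₀ ^ γ)*(x₀ i)^2
            - 4*γ*(Qf x₀ ^ γ)*(x₀ i)*((fderiv ℝ U x₀ (EuclideanSpace.single i 1))*(Qf x₀)
              - 2*γ*(U x₀)*(x₀ i))) * hPq'
        + (-4*γ*(γ-1)*(U x₀)*(Qf x₀ ^ γ)*(x₀ i)^2*(Qf x₀)) * hPqq'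
    rw [hid]
    exact hKL
  -- sum over directions
  have hsumle := Finset.sum_nonpos (fun i (_ : i ∈ Finset.univ) => key2 i)
  rw [Finset.sum_add_distrib, Finset.sum_add_distrib] at hsumle
  have hsum1 : ∑ i : Fin d, Qf x₀^2 * ((Qf x₀ ^ γ)^2 *
      fderiv ℝ (fun y => fderiv ℝ U y (EuclideanSpace.single i 1)) x₀
        (EuclideanSpace.single i 1)) = Qf x₀^2 * ((Qf x₀ ^ γ)^2 * EuclLaplacian U x₀) := by
    simp [EuclLaplacian, Finset.mul_sum]
  have hsum2 : ∑ i : Fin d, (4*γ*(γ-1) - 8*γ^2) * ((Qf x₀ ^ γ)^2 * U x₀) * (x₀ i)^2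
      = (4*γ*(γ-1) - 8*γ^2) * ((Qf x₀ ^ γ)^2 * U x₀) * Qf x₀ := by
    rw [← Finset.mul_sum]
    rfl
  have hsum3 : ∑ _i : Fin d, 2*γ*((Qf x₀ ^ γ)^2 * U x₀) * Qf x₀
      = (d:ℝ) * (2*γ*((Qf x₀ ^ γ)^2 * U x₀) * Qf x₀) := by
    rw [Finset.sum_const, Finset.card_univ, Fintype.card_fin, nsmul_eq_mul]
  rw [hsum1, hsum2, hsum3] at hsumle
  -- the eigenvalue equation at x₀
  have hLU : EuclLaplacian U x₀ = (v ‖x₀‖ - lam) * U x₀ := by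
    have := heq x₀ hx₀0
    linarith
  rw [hLU] at hsumle
  -- geometric facts
  have hr0 : 0 < ‖x₀‖ := norm_pos_iff.mpr hx₀0
  have hrd' : ‖x₀‖ < rd := by
    have := hΩb hx₀Ω
    rwa [Metric.mem_ball, dist_zero_right] at this
  have hvr := hpos ‖x₀‖ ⟨hr0, hrd'⟩
  have hqr : Qf x₀ = ‖x₀‖^2 := Qf_eq_norm x₀
  have hb1 : 0 < Qf x₀ * v ‖x₀‖ + ((d:ℝ)-2)^2/4 := by
    have h6 := mul_pos hq hvr
    rw [mul_add, hqr] at h6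
    rw [show ‖x₀‖^2 * (((d:ℝ)-2)^2/(4*‖x₀‖^2)) = ((d:ℝ)-2)^2/4 by
      field_simp] at h6
    rw [hqr]
    linarith
  -- final contradiction
  have hA2U : 0 < (Qf x₀ ^ γ)^2 * U x₀ := by positivity
  have hcoef : 4*γ*(γ-1) - 8*γ^2 + 2*γ*(d:ℝ) = ((d:ℝ)-2)^2/4 := by
    rw [hγdef]; ring
  nlinarith [hsumle, mul_pos hA2U hb1, mul_pos (mul_pos hA2U hq) (mul_pos hq (neg_pos.mpr hlam)),
    mul_pos hq hq, hcoef, mul_pos hA2U hq]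

lemma Laplacian_neg {d : ℕ} (u : EuclideanSpace ℝ (Fin d) → ℝ)
    (x : EuclideanSpace ℝ (Fin d)) : EuclLaplacian (fun y => -u y) x = -EuclLaplacian u x := by
  rw [EuclLaplacian, EuclLaplacian, ← Finset.sum_neg_distrib]
  apply Finset.sum_congr rfl
  intro i _
  have h1 : (fun y => fderiv ℝ (fun z => -u z) y (EuclideanSpace.single i 1))
      = fun y => -(fderiv ℝ u y (EuclideanSpace.single i 1)) := by
    funext y
    rw [fderiv_fun_neg]
    simp
  rw [h1, fderiv_fun_neg]
  simp

theorem stmt1 (d : ℕ) (hd : 3 ≤ d) (v : ℝ → ℝ) (hv : ContinuousOn v (Set.Ioi 0))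
    (rd : ℝ) (hrd : 0 < rd)
    (hpos : ∀ r ∈ Set.Ioo (0 : ℝ) rd, v r + ((d : ℝ) - 2) ^ 2 / (4 * r ^ 2) > 0)
    (lam : ℝ) (hlam : lam < 0) (u : EuclideanSpace ℝ (Fin d) → ℝ)
    (hu : ContDiff ℝ 2 u) (hu0 : u ≠ 0)
    (huL2 : MemLp u 2 volume)
    (hgradL2 : MemLp (fun x => ‖gradient u x‖) 2 volume)
    (heq : ∀ x : EuclideanSpace ℝ (Fin d), x ≠ 0 →
      -EuclLaplacian u x + v ‖x‖ * u x = lam * u x)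
    (Ω : Set (EuclideanSpace ℝ (Fin d)))
    (hΩ : ∃ x ∈ {y | u y ≠ 0}, Ω = connectedComponentIn {y | u y ≠ 0} x) :
    ¬ Ω ⊆ Metric.ball (0 : EuclideanSpace ℝ (Fin d)) rd := by
  intro hsub
  obtain ⟨x, hxS, hΩeq⟩ := hΩ
  set S : Set (EuclideanSpace ℝ (Fin d)) := {y | u y ≠ 0} with hSdef
  have hSopen : IsOpen S := isOpen_ne_fun hu.continuous continuous_const
  have hΩopen : IsOpen Ω := by rw [hΩeq]; exact hSopen.connectedComponentIn
  have hΩsubS : Ω ⊆ S := by rw [hΩeq]; exact connectedComponentIn_subset _ _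
  have hxΩ : x ∈ Ω := by rw [hΩeq]; exact mem_connectedComponentIn hxS
  have hΩconn : IsPreconnected Ω := by
    rw [hΩeq]
    exact (isConnected_connectedComponentIn_iff.mpr hxS).isPreconnected
  -- closure property
  have hclosS : ∀ y ∈ closure Ω, y ∉ Ω → u y = 0 := by
    intro y hyc hyn
    by_contra hy0
    have hyS : y ∈ S := hy0
    have hopen : IsOpen (connectedComponentIn S y) := hSopen.connectedComponentIn
    have hmem : connectedComponentIn S y ∈ 𝓝 y :=
      hopen.mem_nhds (mem_connectedComponentIn hyS)
    obtain ⟨z, hz1, hz2⟩ := mem_closure_iff_nhds.mp hyc _ hmem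
    have h1 : connectedComponentIn S y = connectedComponentIn S z :=
      connectedComponentIn_eq hz1
    rw [hΩeq] at hz2
    have h2 : connectedComponentIn S x = connectedComponentIn S z :=
      connectedComponentIn_eq hz2
    exact hyn (by rw [hΩeq, h2, ← h1]; exact mem_connectedComponentIn hyS)
  -- constant sign on Ω
  have hopneg : IsOpen {y : EuclideanSpace ℝ (Fin d) | u y < 0} :=
    isOpen_lt hu.continuous continuous_const
  have hoppos : IsOpen {y : EuclideanSpace ℝ (Fin d) | 0 < u y} :=
    isOpen_lt continuous_const hu.continuous
  have hdisj : Disjoint {y : EuclideanSpace ℝ (Fin d) | 0 < u y}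
      {y : EuclideanSpace ℝ (Fin d) | u y < 0} :=
    Set.disjoint_left.mpr (fun a ha hb => absurd (lt_trans (α := ℝ) hb ha) (lt_irrefl _))
  have hcover : Ω ⊆ {y : EuclideanSpace ℝ (Fin d) | 0 < u y} ∪ {y | u y < 0} := by
    intro y hy
    rcases lt_or_gt_of_ne (hΩsubS hy : u y ≠ 0) with hlt | hgt
    · exact Or.inr hlt
    · exact Or.inl hgt
  have hsign : Ω ⊆ {y | 0 < u y} ∨ Ω ⊆ {y | u y < 0} := by
    rcases lt_or_gt_of_ne (hxS : u x ≠ 0) with hneg | hpos'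
    · right
      exact hΩconn.subset_right_of_subset_union hoppos hopneg hdisj hcover ⟨x, hxΩ, hneg⟩
    · left
      exact hΩconn.subset_left_of_subset_union hoppos hopneg hdisj hcover ⟨x, hxΩ, hpos'⟩
  rcases hsign with hsgn | hsgn
  · exact key hd hpos hlam hu heq hΩopen ⟨x, hxΩ⟩ hsub (fun y hy => hsgn hy) hclosS
  · refine key hd hpos hlam (U := fun y => -u y) hu.neg ?_ hΩopen ⟨x, hxΩ⟩ hsub
      (fun y hy => by simpa using (hsgn hy : u y < 0)) (fun y hy hyn => by
        simp [hclosS y hy hyn])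
    intro y hy
    rw [Laplacian_neg]
    have := heq y hy
    ring_nf
    ring_nf at this
    linarith
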